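/- For every integer L ≥ 0, the number of RSF layouts on L qubits equals T(L), the number of partial matchings of an L-element set; that is, there is a bijection between RSF layouts on L qubits and partial matchings of {1,…,L}. -/

import Mathlib

/-- Telephone (involution) numbers: `T 0 = T 1 = 1`, `T (n+2) = T (n+1) + (n+1) * T n`. -/
def telephone : ℕ → ℕ
  | 0 => 1
  | 1 => 1
  | n + 2 => telephone (n + 1) + (n + 1) * telephone n

/-- A partial matching of `{1,…,L}`: a set of pairwise disjoint two-element
subsets of `{1,…,L}`. -/
def IsPartialMatching (L : ℕ) (D : Finset (Finset ℕ)) : Prop :=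
  (∀ e ∈ D, e.card = 2) ∧ (∀ e ∈ D, e ⊆ Finset.Icc 1 L) ∧
    ∀ e ∈ D, ∀ f ∈ D, e ≠ f → Disjoint e f

/-- An RSF (right standard form) layout on `L` qubits: a finite sequence
`((k_1,l_1),…,(k_n,l_n))` (possibly empty) of pairs of positive integers with
`k_i + 2 ≤ k_{i+1}` for consecutive entries and `1 ≤ l_i ≤ L - k_i` for each entry. -/
def IsRSF (L : ℕ) (s : List (ℕ × ℕ)) : Prop :=
  (∀ p ∈ s, 1 ≤ p.1 ∧ 1 ≤ p.2 ∧ p.2 ≤ L - p.1) ∧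
    s.Chain' fun p q => p.1 + 2 ≤ q.1

/-- The number of RSF layouts on `L` qubits. -/
noncomputable def numRSF (L : ℕ) : ℕ :=
  Nat.card {s : List (ℕ × ℕ) // IsRSF L s}

/-- The number of RSF layouts on `L` qubits equals the telephone number `T L`;
that is, there is a bijection between RSF layouts on `L` qubits and partial
matchings of `{1,…,L}`. -/
def matchSet (S : Finset ℕ) : Finset (Finset (Finset ℕ)) :=
  S.powerset.powerset.filter fun D =>
    (∀ e ∈ D, e.card = 2) ∧ ∀ e ∈ D, ∀ f ∈ D, e ≠ f → Disjoint e f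

lemma mem_matchSet {S : Finset ℕ} {D : Finset (Finset ℕ)} :
    D ∈ matchSet S ↔ (∀ e ∈ D, e ⊆ S) ∧ (∀ e ∈ D, e.card = 2) ∧
      ∀ e ∈ D, ∀ f ∈ D, e ≠ f → Disjoint e f := by
  simp only [matchSet, Finset.mem_filter, Finset.mem_powerset]
  constructor
  · rintro ⟨h1, h2, h3⟩
    exact ⟨fun e he => Finset.mem_powerset.mp (h1 he), h2, h3⟩
  · rintro ⟨h1, h2, h3⟩
    exact ⟨fun e he => Finset.mem_powerset.mpr (h1 e he), h2, h3⟩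

lemma matchSet_small {S : Finset ℕ} (h : S.card ≤ 1) : matchSet S = {∅} := by
  ext D
  simp only [mem_matchSet, Finset.mem_singleton]
  constructor
  · rintro ⟨h1, h2, -⟩
    refine Finset.eq_empty_of_forall_notMem fun e he => ?_
    have := Finset.card_le_card (h1 e he)
    have := h2 e he
    omega
  · rintro rfl
    refine ⟨by simp, by simp, by simp⟩

lemma matchSet_key {S : Finset ℕ} {a : ℕ} (ha : a ∈ S) :
    (matchSet S).filter (fun D => ∀ e ∈ D, a ∉ e) = matchSet (S.erase a) := by
  ext D
  simp only [Finset.mem_filter, mem_matchSet]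
  constructor
  · rintro ⟨⟨h1, h2, h3⟩, h4⟩
    exact ⟨fun e he => (Finset.subset_erase).mpr ⟨h1 e he, h4 e he⟩, h2, h3⟩
  · rintro ⟨h1, h2, h3⟩
    refine ⟨⟨fun e he => (h1 e he).trans (Finset.erase_subset _ _), h2, h3⟩,
      fun e he hae => (Finset.mem_erase.mp (h1 e he hae)).1 rfl⟩

lemma card_matchSet : ∀ (n : ℕ) (S : Finset ℕ), S.card = n →
    (matchSet S).card = telephone n := by
  intro n
  induction n using Nat.strong_induction_on with
  | _ n ih =>
    match n with
    | 0 => intro S hS; rw [matchSet_small (by omega)]; rfl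
    | 1 => intro S hS; rw [matchSet_small (by omega)]; rfl
    | n + 2 =>
      intro S hS
      have hpos : 0 < S.card := by omega
      obtain ⟨a, ha⟩ := Finset.card_pos.mp hpos
      set S' := S.erase a with hS'
      have hS'card : S'.card = n + 1 := by
        rw [hS', Finset.card_erase_of_mem ha]; omega
      classical
      have hsplit := Finset.card_filter_add_card_filter_not
        (s := matchSet S) (p := fun D => ∀ e ∈ D, a ∉ e)
      rw [matchSet_key ha] at hsplit
      have h1 : (matchSet S').card = telephone (n + 1) := ih (n+1) (by omega) S' hS'card
      -- covering part
      have h2 : ((matchSet S).filter (fun D => ¬ ∀ e ∈ D, a ∉ e)).card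
          = (S'.sigma (fun b => matchSet (S'.erase b))).card := by
        symm
        refine Finset.card_bij (fun (p : Σ _ : ℕ, Finset (Finset ℕ)) (_ : p ∈ S'.sigma fun b => matchSet (S'.erase b)) => insert {a, p.1} p.2) ?_ ?_ ?_
        · rintro ⟨b, D⟩ hp
          simp only [Finset.mem_sigma] at hp
          obtain ⟨hb, hD⟩ := hp
          rw [mem_matchSet] at hD
          obtain ⟨hD1, hD2, hD3⟩ := hD
          have hab : b ≠ a := (Finset.mem_erase.mp hb).1
          have hbS : b ∈ S := (Finset.mem_erase.mp hb).2
          have hedge : ∀ e ∈ D, a ∉ e ∧ b ∉ e := by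
            intro e he
            have := hD1 e he
            constructor
            · intro hae
              exact (Finset.mem_erase.mp (Finset.mem_erase.mp (this hae)).2).1 rfl
            · intro hbe
              exact (Finset.mem_erase.mp (this hbe)).1 rfl
          have habD : ({a, b} : Finset ℕ) ∉ D := fun h => (hedge _ h).1 (by simp)
          simp only [Finset.mem_filter, mem_matchSet]
          refine ⟨⟨?_, ?_, ?_⟩, ?_⟩
          · intro e he
            rcases Finset.mem_insert.mp he with rfl | he'
            · intro x hx
              rcases Finset.mem_insert.mp hx with rfl | hx'
              · exact ha
              · rw [Finset.mem_singleton.mp hx']; exact hbS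
            · exact (hD1 e he').trans ((Finset.erase_subset _ _).trans (Finset.erase_subset _ _))
          · intro e he
            rcases Finset.mem_insert.mp he with rfl | he'
            · rw [Finset.card_insert_of_notMem (by simp [Ne.symm hab]), Finset.card_singleton]
            · exact hD2 e he'
          · intro e he f hf hef
            rcases Finset.mem_insert.mp he with rfl | he' <;>
              rcases Finset.mem_insert.mp hf with rfl | hf'
            · exact absurd rfl hef
            · rw [Finset.disjoint_left]
              intro x hx
              rcases Finset.mem_insert.mp hx with rfl | hx'
              · exact (hedge _ hf').1
              · rw [Finset.mem_singleton.mp hx']; exact (hedge _ hf').2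
            · rw [Finset.disjoint_right]
              intro x hx
              rcases Finset.mem_insert.mp hx with rfl | hx'
              · exact (hedge _ he').1
              · rw [Finset.mem_singleton.mp hx']; exact (hedge _ he').2
            · exact hD3 e he' f hf' hef
          · push_neg
            exact ⟨{a, b}, Finset.mem_insert_self _ _, by simp⟩
        · rintro ⟨b₁, D₁⟩ hp₁ ⟨b₂, D₂⟩ hp₂ heq
          simp only at heq
          simp only [Finset.mem_sigma] at hp₁ hp₂
          obtain ⟨hb₁, hD₁⟩ := hp₁
          obtain ⟨hb₂, hD₂⟩ := hp₂
          rw [mem_matchSet] at hD₁ hD₂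
          have hedge : ∀ b (hb : b ∈ S'.erase b) (D : Finset (Finset ℕ)), True := fun _ _ _ => trivial
          have key : ∀ (b : ℕ) (D : Finset (Finset ℕ)), b ∈ S' → (∀ e ∈ D, e ⊆ (S'.erase b)) →
              ∀ e ∈ D, a ∉ e ∧ b ∉ e := by
            intro b D hb hsub e he
            have := hsub e he
            constructor
            · intro hae
              have := this hae
              exact (Finset.mem_erase.mp (Finset.mem_erase.mp this).2).1 rfl
            · intro hbe
              exact (Finset.mem_erase.mp (this hbe)).1 rfl
          have k₁ := key b₁ D₁ hb₁ hD₁.1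
          have k₂ := key b₂ D₂ hb₂ hD₂.1
          have hb1b2 : b₁ = b₂ := by
            have hmem : ({a, b₁} : Finset ℕ) ∈ insert {a, b₂} D₂ := by
              rw [← heq]; exact Finset.mem_insert_self _ _
            rcases Finset.mem_insert.mp hmem with h | h
            · have : b₁ ∈ ({a, b₂} : Finset ℕ) := by rw [← h]; simp
              rcases Finset.mem_insert.mp this with rfl | h'
              · exact absurd (Finset.mem_erase.mp hb₁).1 (by simp)
              · exact Finset.mem_singleton.mp h'
            · exact absurd (by simp : a ∈ ({a, b₁} : Finset ℕ)) ((k₂ _ h).1)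
          subst hb1b2
          have hD : D₁ = D₂ := by
            have h1 : ({a, b₁} : Finset ℕ) ∉ D₁ := fun h => (k₁ _ h).1 (by simp)
            have h2 : ({a, b₁} : Finset ℕ) ∉ D₂ := fun h => (k₂ _ h).1 (by simp)
            have := congrArg (fun X => Finset.erase X {a, b₁}) heq
            simpa [Finset.erase_insert h1, Finset.erase_insert h2] using this
          simp [hD]
        · intro D hD
          simp only [Finset.mem_filter, mem_matchSet] at hD
          obtain ⟨⟨h1, h2, h3⟩, h4⟩ := hD
          push_neg at h4
          obtain ⟨e, he, hae⟩ := h4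
          obtain ⟨x, y, hxy, hexy⟩ := Finset.card_eq_two.mp (h2 e he)
          -- a is x or y; let b be the other
          have : ∃ b, b ≠ a ∧ e = {a, b} := by
            subst hexy
            rcases Finset.mem_insert.mp hae with rfl | h
            · exact ⟨y, fun h => hxy h.symm, rfl⟩
            · have hay : a = y := Finset.mem_singleton.mp h
              subst hay
              exact ⟨x, fun h => hxy h, by rw [Finset.pair_comm]⟩
          obtain ⟨b, hba, rfl⟩ := this
          have hbS : b ∈ S := h1 _ he (by simp)
          have hbS' : b ∈ S' := Finset.mem_erase.mpr ⟨hba, hbS⟩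
          refine ⟨⟨b, D.erase {a, b}⟩, ?_, ?_⟩
          · simp only [Finset.mem_sigma]
            refine ⟨hbS', mem_matchSet.mpr ⟨?_, ?_, ?_⟩⟩
            · intro f hf
              obtain ⟨hfe, hfD⟩ := Finset.mem_erase.mp hf
              have hdisj := h3 f hfD _ he hfe
              intro x hx
              have hxS : x ∈ S := h1 f hfD hx
              have hxa : x ≠ a := fun h => (Finset.disjoint_left.mp hdisj hx) (by simp [h])
              have hxb : x ≠ b := fun h => (Finset.disjoint_left.mp hdisj hx) (by simp [h])
              exact Finset.mem_erase.mpr ⟨hxb, Finset.mem_erase.mpr ⟨hxa, hxS⟩⟩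
            · exact fun f hf => h2 f ((Finset.erase_subset _ _) hf)
            · intro f hf g hg
              exact h3 f ((Finset.erase_subset _ _) hf) g ((Finset.erase_subset _ _) hg)
          · exact Finset.insert_erase he
      have h3 : ∑ b ∈ S', (matchSet (S'.erase b)).card = (n+1) * telephone n := by
        rw [Finset.sum_congr rfl (fun b hb => ih n (by omega) (S'.erase b)
          (by rw [Finset.card_erase_of_mem hb]; omega))]
        rw [Finset.sum_const, hS'card, smul_eq_mul]
      rw [Finset.card_sigma] at h2
      rw [h3] at h2
      rw [hS'] at h1
      have ht : telephone (n+2) = telephone (n+1) + (n+1) * telephone n := rfl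
      omega

instance : IsTrans (ℕ × ℕ) (fun p q => p.1 + 2 ≤ q.1) :=
  ⟨fun _ _ _ h1 h2 => by omega⟩

lemma isRSF_nil (L : ℕ) : IsRSF L [] := ⟨by simp, List.isChain_nil⟩

lemma isRSF_tail {L : ℕ} {a : ℕ × ℕ} {t : List (ℕ × ℕ)} (h : IsRSF L (a :: t)) :
    IsRSF L t :=
  ⟨fun p hp => h.1 p (List.mem_cons_of_mem _ hp), h.2.tail⟩

lemma tail_ge {L : ℕ} {a : ℕ × ℕ} {t : List (ℕ × ℕ)} (h : IsRSF L (a :: t)) :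
    ∀ p ∈ t, a.1 + 2 ≤ p.1 := by
  have := List.isChain_iff_pairwise.mp h.2
  exact fun p hp => (List.pairwise_cons.mp this).1 p hp

lemma map_updown (d : ℕ) (t : List (ℕ × ℕ)) (h : ∀ p ∈ t, d ≤ p.1) :
    ((t.map fun p => (p.1 - d, p.2)).map fun p => (p.1 + d, p.2)) = t := by
  rw [List.map_map]
  conv_rhs => rw [← List.map_id t]
  refine List.map_congr_left fun p hp => ?_
  have := h p hp
  simp only [Function.comp_apply, id_eq]
  exact Prod.ext (by omega) rfl

lemma map_downup (d : ℕ) (t : List (ℕ × ℕ)) :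
    ((t.map fun p => (p.1 + d, p.2)).map fun p => (p.1 - d, p.2)) = t := by
  rw [List.map_map]
  conv_rhs => rw [← List.map_id t]
  refine List.map_congr_left fun p hp => ?_
  exact Prod.ext (by simp) rfl

lemma isRSF_shift_down (L d : ℕ) {s : List (ℕ × ℕ)} (hs : IsRSF (L + d) s)
    (h2 : ∀ p ∈ s, d < p.1) : IsRSF L (s.map fun p => (p.1 - d, p.2)) := by
  constructor
  · intro p hp
    obtain ⟨q, hq, rfl⟩ := List.mem_map.mp hp
    have hb := hs.1 q hq
    have := h2 q hq
    simp only
    omega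
  · rw [List.Chain', List.isChain_map]
    haveI : IsTrans (ℕ × ℕ) (fun p q : ℕ × ℕ => (p.1 - d, p.2).1 + 2 ≤ (q.1 - d, q.2).1) :=
      ⟨fun a b c h1 h2 => by simp only at *; omega⟩
    rw [List.isChain_iff_pairwise]
    have hpw := List.isChain_iff_pairwise.mp hs.2
    refine List.Pairwise.imp_of_mem ?_ hpw
    intro p q hp hq h
    have := h2 p hp
    simp only
    omega

lemma isRSF_shift_up (L d : ℕ) {s : List (ℕ × ℕ)} (hs : IsRSF L s) :
    IsRSF (L + d) (s.map fun p => (p.1 + d, p.2)) := by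
  constructor
  · intro p hp
    obtain ⟨q, hq, rfl⟩ := List.mem_map.mp hp
    have hb := hs.1 q hq
    simp only
    omega
  · rw [List.Chain', List.isChain_map]
    exact hs.2.imp fun {p q} h => by simpa using by omega

def rsfFwd (L : ℕ) : {s : List (ℕ × ℕ) // IsRSF (L + 2) s} →
    ({s : List (ℕ × ℕ) // IsRSF (L + 1) s} ⊕ Fin (L + 1) × {s : List (ℕ × ℕ) // IsRSF L s})
  | ⟨[], _⟩ => Sum.inl ⟨[], isRSF_nil _⟩
  | ⟨(k, l) :: t, hs⟩ =>
    if hk : k = 1 then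
      Sum.inr (⟨l - 1, by have := hs.1 (k, l) (by simp); simp only at this; omega⟩,
        ⟨t.map fun p => (p.1 - 2, p.2), by
          refine isRSF_shift_down L 2 (isRSF_tail hs) fun p hp => ?_
          have := tail_ge hs p hp
          simp only at this
          omega⟩)
    else
      Sum.inl ⟨((k, l) :: t).map fun p => (p.1 - 1, p.2), by
        refine isRSF_shift_down (L + 1) 1 ((show L + 2 = L + 1 + 1 by omega) ▸ hs) fun p hp => ?_
        rcases List.mem_cons.mp hp with rfl | hp'
        · have := hs.1 (k, l) (by simp); simp only at *; omega
        · have := tail_ge hs p hp'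
          simp only at this
          omega⟩

def rsfBwd (L : ℕ) :
    ({s : List (ℕ × ℕ) // IsRSF (L + 1) s} ⊕ Fin (L + 1) × {s : List (ℕ × ℕ) // IsRSF L s}) →
    {s : List (ℕ × ℕ) // IsRSF (L + 2) s}
  | Sum.inl ⟨s, hs⟩ => ⟨s.map fun p => (p.1 + 1, p.2), by
      have := isRSF_shift_up (L + 1) 1 hs
      exact (show L + 1 + 1 = L + 2 by omega) ▸ this⟩
  | Sum.inr (j, ⟨t, ht⟩) => ⟨(1, j.val + 1) :: t.map fun p => (p.1 + 2, p.2), by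
      have hsh := isRSF_shift_up L 2 ht
      constructor
      · intro p hp
        rcases List.mem_cons.mp hp with rfl | hp'
        · have := j.isLt; simp only; omega
        · exact hsh.1 p hp'
      · rw [List.Chain', List.isChain_cons]
        refine ⟨fun q hq => ?_, hsh.2⟩
        obtain ⟨r, hr, hrq⟩ := List.mem_map.mp (List.mem_of_mem_head? hq)
        subst hrq
        have := ht.1 r hr
        simp only
        omega⟩

def rsfEquiv (L : ℕ) : {s : List (ℕ × ℕ) // IsRSF (L + 2) s} ≃
    ({s : List (ℕ × ℕ) // IsRSF (L + 1) s} ⊕ Fin (L + 1) × {s : List (ℕ × ℕ) // IsRSF L s}) where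
  toFun := rsfFwd L
  invFun := rsfBwd L
  left_inv := by
    rintro ⟨s, hs⟩
    match s, hs with
    | [], hs => rfl
    | (k, l) :: t, hs =>
      by_cases hk : k = 1
      · simp only [rsfFwd, dif_pos hk, rsfBwd]
        refine Subtype.ext ?_
        simp only
        have hl : 1 ≤ l := (hs.1 (k, l) (by simp)).2.1
        rw [map_updown 2 t (fun p hp => by have := tail_ge hs p hp; simp only at this; omega)]
        subst hk
        have hll : l - 1 + 1 = l := by omega
        rw [hll]
      · simp only [rsfFwd, dif_neg hk, rsfBwd]
        refine Subtype.ext ?_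
        simp only
        exact map_updown 1 ((k, l) :: t) (fun p hp => (hs.1 p hp).1)
  right_inv := by
    rintro (⟨s, hs⟩ | ⟨j, t, ht⟩)
    · match s, hs with
      | [], hs => rfl
      | (k, l) :: t, hs =>
        simp only [rsfBwd, List.map_cons, rsfFwd]
        have hk : ¬ (k + 1 = 1) := by
          have := (hs.1 (k, l) (by simp)).1
          omega
        rw [dif_neg hk]
        refine congrArg Sum.inl (Subtype.ext ?_)
        simp only
        have := map_downup 1 ((k, l) :: t)
        simpa using this
    · simp only [rsfBwd, rsfFwd, dif_pos rfl]
      refine congrArg Sum.inr ?_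
      refine Prod.ext ?_ (Subtype.ext ?_)
      · simp
      · simp only
        exact map_downup 2 t

lemma rsf_small {L : ℕ} (hL : L ≤ 1) {s : List (ℕ × ℕ)} (hs : IsRSF L s) : s = [] := by
  refine List.eq_nil_iff_forall_not_mem.mpr fun p hp => ?_
  have := hs.1 p hp
  omega

def rsfUniqueSmall {L : ℕ} (hL : L ≤ 1) : Unique {s : List (ℕ × ℕ) // IsRSF L s} where
  default := ⟨[], isRSF_nil L⟩
  uniq := fun ⟨s, hs⟩ => Subtype.ext (rsf_small hL hs)

lemma rsf_finite_and_card (L : ℕ) :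
    Finite {s : List (ℕ × ℕ) // IsRSF L s} ∧
      Nat.card {s : List (ℕ × ℕ) // IsRSF L s} = telephone L := by
  induction L using Nat.strong_induction_on with
  | _ L ih =>
    match L with
    | 0 =>
      haveI := rsfUniqueSmall (L := 0) (by omega)
      exact ⟨inferInstance, Nat.card_unique⟩
    | 1 =>
      haveI := rsfUniqueSmall (L := 1) (by omega)
      exact ⟨inferInstance, Nat.card_unique⟩
    | L + 2 =>
      obtain ⟨f1, c1⟩ := ih (L + 1) (by omega)
      obtain ⟨f0, c0⟩ := ih L (by omega)
      haveI := f1; haveI := f0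
      haveI : Finite {s : List (ℕ × ℕ) // IsRSF (L + 2) s} :=
        Finite.of_equiv _ (rsfEquiv L).symm
      refine ⟨this, ?_⟩
      rw [Nat.card_congr (rsfEquiv L), Nat.card_sum, Nat.card_prod,
        Nat.card_eq_fintype_card (α := Fin (L + 1)), Fintype.card_fin, c1, c0]
      rfl

theorem numRSF_eq_telephone (L : ℕ) :
    numRSF L = telephone L ∧
      Nonempty ({s : List (ℕ × ℕ) // IsRSF L s} ≃
        {D : Finset (Finset ℕ) // IsPartialMatching L D}) := by
  obtain ⟨hfin, hcard⟩ := rsf_finite_and_card L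
  have hmatch_equiv : {D : Finset (Finset ℕ) // IsPartialMatching L D} ≃
      {D : Finset (Finset ℕ) // D ∈ matchSet (Finset.Icc 1 L)} :=
    Equiv.subtypeEquivRight fun D => by
      rw [IsPartialMatching, mem_matchSet]; tauto
  haveI : Finite {D : Finset (Finset ℕ) // IsPartialMatching L D} :=
    Finite.of_equiv _ hmatch_equiv.symm
  have hIcc : (Finset.Icc 1 L).card = L := by rw [Nat.card_Icc]; omega
  have hm : Nat.card {D : Finset (Finset ℕ) // IsPartialMatching L D} = telephone L := by
    rw [Nat.card_congr hmatch_equiv, Nat.card_eq_finsetCard,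
      card_matchSet L (Finset.Icc 1 L) hIcc]
  haveI := hfin
  exact ⟨hcard, Finite.card_eq.mp (by rw [hm]; exact hcard)⟩
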